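/- Let v = v(t) be defined implicitly by t² = 3 - 2v - v^{-2} on the curve parameterized by v = x ± √(√x - x²), x ∈ [0,1]. Then along this curve: |v| ≤ 1, 1 ≤ |2v+1| ≤ 3, and 0.9621 ≤ |v²+v+1| ≤ 3. -/

import Mathlib

open Complex

set_option maxHeartbeats 1000000 in
/-- On the curve `v = x ± i√(√x - x²)`, `x ∈ [0,1]` (the curve defined by
`t² = 3 - 2v - v⁻²`), one has `|v| ≤ 1`, `1 ≤ |2v+1| ≤ 3` and
`0.9621 ≤ |v²+v+1| ≤ 3`. -/
theorem curve_bounds (x : ℝ) (hx : x ∈ Set.Icc (0 : ℝ) 1) (v : ℂ)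
    (hv : v = (x : ℂ) + Complex.I * (Real.sqrt (Real.sqrt x - x ^ 2) : ℝ) ∨
          v = (x : ℂ) - Complex.I * (Real.sqrt (Real.sqrt x - x ^ 2) : ℝ)) :
    ‖v‖ ≤ 1 ∧
    1 ≤ ‖2 * v + 1‖ ∧ ‖2 * v + 1‖ ≤ 3 ∧
    0.9621 ≤ ‖v ^ 2 + v + 1‖ ∧ ‖v ^ 2 + v + 1‖ ≤ 3 := by
  obtain ⟨hx0, hx1⟩ := hx
  have hre : v.re = x := by rcases hv with h | h <;> subst h <;> simp
  obtain ⟨s, hs0, hs1, hsx, him⟩ :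
      ∃ s : ℝ, 0 ≤ s ∧ s ≤ 1 ∧ x = s ^ 2 ∧ v.im ^ 2 = s - s ^ 4 := by
    refine ⟨Real.sqrt x, Real.sqrt_nonneg x, ?_, (Real.sq_sqrt hx0).symm, ?_⟩
    · rw [show (1:ℝ) = Real.sqrt 1 by simp]
      exact Real.sqrt_le_sqrt hx1
    · have hsx : Real.sqrt x ^ 2 = x := Real.sq_sqrt hx0
      have hnn : 0 ≤ Real.sqrt x - x ^ 2 := by
        have ht1 : Real.sqrt x ≤ 1 := Real.sqrt_le_one.2 hx1
        have ht0 : 0 ≤ Real.sqrt x := Real.sqrt_nonneg x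
        nlinarith [mul_nonneg ht0 (sub_nonneg.2 ht1), mul_nonneg (mul_nonneg ht0 ht0) (sub_nonneg.2 ht1)]
      have hy2 : Real.sqrt (Real.sqrt x - x ^ 2) ^ 2 = Real.sqrt x - x ^ 2 :=
        Real.sq_sqrt hnn
      have him : v.im ^ 2 = Real.sqrt x - x ^ 2 := by
        rcases hv with h | h <;> subst h <;> simpa using hy2
      rw [him]; nlinarith
  subst hsx
  have ha : (‖v‖) ^ 2 = s := by
    rw [Complex.sq_norm, Complex.normSq_apply, hre]
    linear_combination him
  have hb : (‖2 * v + 1‖) ^ 2 = (2 * s + 1) ^ 2 := by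
    rw [Complex.sq_norm, Complex.normSq_apply]
    simp [hre]
    linear_combination 4 * him
  have hc : (‖v ^ 2 + v + 1‖) ^ 2
      = 4 * s ^ 4 + 2 * s ^ 3 + 3 * s ^ 2 - s + 1 := by
    rw [Complex.sq_norm, Complex.normSq_apply]
    simp [pow_two, Complex.mul_re, Complex.mul_im, hre]
    linear_combination (-(2 * (s ^ 4 + s ^ 2 + 1) - v.im ^ 2 - (s - s ^ 4))
      + (2 * s ^ 2 + 1) ^ 2) * him
  have ha0 : 0 ≤ ‖v‖ := norm_nonneg _
  have hb0 : 0 ≤ ‖2 * v + 1‖ := norm_nonneg _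
  have hc0 : 0 ≤ ‖v ^ 2 + v + 1‖ := norm_nonneg _
  refine ⟨by nlinarith, by nlinarith, by nlinarith, ?_, by nlinarith⟩
  have key : (0.9621 : ℝ) ^ 2 ≤ 4 * s ^ 4 + 2 * s ^ 3 + 3 * s ^ 2 - s + 1 := by
    nlinarith [sq_nonneg (s - 0.14), mul_nonneg hs0 (sq_nonneg (s - 0.14)),
      sq_nonneg (s ^ 2 - 0.14 * s), sq_nonneg (2 * s ^ 2 + s - 0.3), sq_nonneg s]
  nlinarith
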